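/- Let S : C(X,ℂ) → C(Y,ℂ) be an additive map with S(1) = 1, S(conj f) = conj(S f) for all f, and ‖S(fg)‖ = ‖S(f)S(g)‖ for all f, g, where S maps real-valued functions to real-valued functions. If g ∈ C(X,ℝ) (viewed in C(X,ℂ)) satisfies ‖S(g)‖ ≤ 1, then ‖1 − S(g²)‖ = ‖1 − S(g)²‖ ≤ 1, and hence S(g²)(y) ≥ 0 for all y ∈ Y. -/

import Mathlib

variable {X Y : Type*} [TopologicalSpace X] [CompactSpace X] [T2Space X]
  [TopologicalSpace Y] [CompactSpace Y] [T2Space Y]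

theorem stmt17 (S : C(X, ℂ) → C(Y, ℂ))
    (hadd : ∀ f g : C(X, ℂ), S (f + g) = S f + S g)
    (hone : S 1 = 1)
    (hstar : ∀ f : C(X, ℂ), S (star f) = star (S f))
    (hnm : ∀ f g : C(X, ℂ), ‖S (f * g)‖ = ‖S f * S g‖)
    (hreal : ∀ f : C(X, ℂ), (∀ x, (f x).im = 0) → ∀ y, (S f y).im = 0) :
    ∀ g : C(X, ℂ), (∀ x, (g x).im = 0) → ‖S g‖ ≤ 1 →
      ‖1 - S (g ^ 2)‖ = ‖1 - (S g) ^ 2‖ ∧ ‖1 - (S g) ^ 2‖ ≤ 1 ∧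
      ∀ y, (S (g ^ 2) y).im = 0 ∧ 0 ≤ (S (g ^ 2) y).re := by
  intro g hg hgle
  have h0 : S 0 = 0 := by
    have h := hadd 0 0
    simp only [add_zero] at h
    exact (left_eq_add.mp h)
  have hsub : ∀ f h : C(X, ℂ), S (f - h) = S f - S h := by
    intro f h
    have h1 : S (f - h) + S h = S f := by
      rw [← hadd]; ring_nf
    linear_combination h1
  -- factorization
  have hfac : (1 : C(X, ℂ)) - g ^ 2 = (1 - g) * (1 + g) := by ring
  have heq : ‖1 - S (g ^ 2)‖ = ‖1 - (S g) ^ 2‖ := by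
    have h1 : (1 : C(Y, ℂ)) - S (g ^ 2) = S (1 - g ^ 2) := by
      rw [hsub, hone]
    have h2 : S (1 - g) = 1 - S g := by rw [hsub, hone]
    have h3 : S (1 + g) = 1 + S g := by rw [hadd, hone]
    rw [h1, hfac, hnm, h2, h3]
    congr 1
    ring
  have him2 : ∀ x, ((g ^ 2) x).im = 0 := by
    intro x
    have := hg x
    simp [pow_two, this]
  refine ⟨heq, ?_, ?_⟩
  · -- sup-norm bound
    apply (ContinuousMap.norm_le _ (by norm_num)).mpr
    intro y
    have him : (S g y).im = 0 := hreal g hg y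
    have habs : ‖S g y‖ ≤ 1 := le_trans (ContinuousMap.norm_coe_le_norm _ y) hgle
    have hre : |(S g y).re| ≤ 1 := le_trans (Complex.abs_re_le_norm _) habs
    set t := (S g y).re with ht
    have hz : (S g y) = (t : ℂ) := Complex.ext rfl (by simpa using him)
    have : ((1 : C(Y, ℂ)) - (S g) ^ 2) y = ((1 - t ^ 2 : ℝ) : ℂ) := by
      simp [hz]
    rw [this, Complex.norm_real, Real.norm_eq_abs, abs_le]
    constructor
    · nlinarith [abs_nonneg t, sq_abs t, hre]
    · nlinarith [sq_nonneg t]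
  · intro y
    have him : (S (g ^ 2) y).im = 0 := hreal (g ^ 2) him2 y
    refine ⟨him, ?_⟩
    have hb : ‖((1 : C(Y, ℂ)) - S (g ^ 2)) y‖ ≤ 1 := by
      refine le_trans (ContinuousMap.norm_coe_le_norm _ y) ?_
      rw [show ‖(1 : C(Y, ℂ)) - S (g ^ 2)‖ = ‖1 - (S g) ^ 2‖ from heq]
      -- reuse bound
      apply (ContinuousMap.norm_le _ (by norm_num)).mpr
      intro y'
      have him' : (S g y').im = 0 := hreal g hg y'
      have habs : ‖S g y'‖ ≤ 1 := le_trans (ContinuousMap.norm_coe_le_norm _ y') hgle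
      have hre : |(S g y').re| ≤ 1 := le_trans (Complex.abs_re_le_norm _) habs
      set t := (S g y').re with ht
      have hz : (S g y') = (t : ℂ) := Complex.ext rfl (by simpa using him')
      have h4 : ((1 : C(Y, ℂ)) - (S g) ^ 2) y' = ((1 - t ^ 2 : ℝ) : ℂ) := by
        simp [hz]
      rw [h4, Complex.norm_real, Real.norm_eq_abs, abs_le]
      constructor
      · nlinarith [abs_nonneg t, sq_abs t, hre]
      · nlinarith [sq_nonneg t]
    set w := S (g ^ 2) y with hw
    have hz : ((1 : C(Y, ℂ)) - S (g ^ 2)) y = ((1 - w.re : ℝ) : ℂ) := by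
      apply Complex.ext <;> simp [him, hw.symm ▸ him, hw]
    rw [hz, Complex.norm_real, Real.norm_eq_abs, abs_le] at hb
    linarith [hb.2]
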